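/- Let X and Y be Banach spaces where Y has the Schur property, and let M be a closed subspace of L(X,Y) such that for each y* ∈ Y* the evaluation operator ψ_{y*} : M → X*, T ↦ T*(y*), is Dunford-Pettis p-convergent. Then M has the p-Dunford-Pettis relatively compact property. -/
import Mathlib


open Filter Topology Set
open scoped ENNReal

noncomputable section

/-- A sequence in a normed space is weakly null. -/
def WeaklyNull {E : Type*} [NormedAddCommGroup E] [NormedSpace ℝ E] (x : ℕ → E) : Prop :=
  ∀ φ : E →L[ℝ] ℝ, Tendsto (fun n => φ (x n)) atTop (𝓝 0)

/-- A bounded set on which every weakly null sequence of functionals converges uniformly. -/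
def DunfordPettisSet {E : Type*} [NormedAddCommGroup E] [NormedSpace ℝ E] (K : Set E) : Prop :=
  Bornology.IsBounded K ∧ ∀ f : ℕ → (E →L[ℝ] ℝ), WeaklyNull f →
    ∀ ε > 0, ∃ N : ℕ, ∀ n ≥ N, ∀ x ∈ K, |f n x| < ε

/-- Weakly `p`-summable sequence; for `p = ∞` this means weakly null. -/
def WeaklyPSummable (p : ℝ≥0∞) {E : Type*} [NormedAddCommGroup E] [NormedSpace ℝ E]
    (x : ℕ → E) : Prop :=
  if p = ∞ then WeaklyNull x else ∀ φ : E →L[ℝ] ℝ, Memℓp (fun n => φ (x n)) p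

def NormNull {E : Type*} [NormedAddCommGroup E] (x : ℕ → E) : Prop :=
  Tendsto (fun n => ‖x n‖) atTop (𝓝 0)

def PRightNull (p : ℝ≥0∞) {E : Type*} [NormedAddCommGroup E] [NormedSpace ℝ E]
    (x : ℕ → E) : Prop :=
  WeaklyPSummable p x ∧ DunfordPettisSet (Set.range x)

def WeaklyPCauchy (p : ℝ≥0∞) {E : Type*} [NormedAddCommGroup E] [NormedSpace ℝ E]
    (x : ℕ → E) : Prop :=
  ∀ k l : ℕ → ℕ, StrictMono k → StrictMono l →
    WeaklyPSummable p (fun n => x (k n) - x (l n))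

def PRightCauchy (p : ℝ≥0∞) {E : Type*} [NormedAddCommGroup E] [NormedSpace ℝ E]
    (x : ℕ → E) : Prop :=
  WeaklyPCauchy p x ∧ DunfordPettisSet (Set.range x)

/-- `p`-Dunford-Pettis relatively compact property. -/
def HasDPrcP (p : ℝ≥0∞) (E : Type*) [NormedAddCommGroup E] [NormedSpace ℝ E] : Prop :=
  ∀ x : ℕ → E, PRightNull p x → NormNull x

/-- A (not necessarily linear) map is Dunford-Pettis `p`-convergent. -/
def DPpConvergent (p : ℝ≥0∞) {E F : Type*} [NormedAddCommGroup E] [NormedSpace ℝ E]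
    [NormedAddCommGroup F] (f : E → F) : Prop :=
  ∀ x : ℕ → E, PRightNull p x → NormNull (fun n => f (x n))

/-- A map is `p`-convergent. -/
def PConvergent (p : ℝ≥0∞) {E F : Type*} [NormedAddCommGroup E] [NormedSpace ℝ E]
    [NormedAddCommGroup F] (f : E → F) : Prop :=
  ∀ x : ℕ → E, WeaklyPSummable p x → NormNull (fun n => f (x n))

/-- The adjoint of a continuous linear operator between normed spaces. -/
def opAdjoint {E F : Type*} [NormedAddCommGroup E] [NormedSpace ℝ E]
    [NormedAddCommGroup F] [NormedSpace ℝ F] (T : E →L[ℝ] F) :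
    (F →L[ℝ] ℝ) →L[ℝ] (E →L[ℝ] ℝ) :=
  (ContinuousLinearMap.compL ℝ E F ℝ).flip T


/-- The Schur property: every weakly null sequence is norm null. -/
def SchurProperty (E : Type*) [NormedAddCommGroup E] [NormedSpace ℝ E] : Prop :=
  ∀ x : ℕ → E, WeaklyNull x → NormNull x

theorem stmt13 {X Y : Type*} [NormedAddCommGroup X] [NormedSpace ℝ X] [CompleteSpace X]
    [NormedAddCommGroup Y] [NormedSpace ℝ Y] [CompleteSpace Y]
    (p : ℝ≥0∞) (hp : 1 ≤ p) (hY : SchurProperty Y)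
    (M : Submodule ℝ (X →L[ℝ] Y)) (hM : IsClosed (M : Set (X →L[ℝ] Y)))
    (hev : ∀ g : Y →L[ℝ] ℝ, DPpConvergent p (fun T : M => opAdjoint (T : X →L[ℝ] Y) g)) :
    HasDPrcP p M := by
  intro T hT
  -- choose near-norming vectors
  have hx : ∀ n : ℕ, ∃ x : X, ‖x‖ ≤ 1 ∧
      ‖(T n : X →L[ℝ] Y)‖ ≤ ‖(T n : X →L[ℝ] Y) x‖ + 1 / (n + 1) := by
    intro n
    by_cases h : ‖(T n : X →L[ℝ] Y)‖ ≤ 1 / (n + 1)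
    · exact ⟨0, by simp, by simpa using h⟩
    · push_neg at h
      have h' : ‖(T n : X →L[ℝ] Y)‖ - 1 / (n + 1) < ‖(T n : X →L[ℝ] Y)‖ := by
        have : (0:ℝ) < 1 / (n + 1) := by positivity
        linarith
      obtain ⟨x, hx1, hx2⟩ := (T n : X →L[ℝ] Y).exists_lt_apply_of_lt_opNorm h'
      exact ⟨x, hx1.le, by linarith⟩
  choose x hx1 hx2 using hx
  -- the sequence (T n) (x n) is weakly null in Y
  have hwn : WeaklyNull (fun n => (T n : X →L[ℝ] Y) (x n)) := by
    intro φ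
    have hadj : NormNull (fun n => opAdjoint ((T n : M) : X →L[ℝ] Y) φ) := hev φ T hT
    have hb : ∀ n, ‖φ ((T n : X →L[ℝ] Y) (x n))‖ ≤
        ‖opAdjoint ((T n : M) : X →L[ℝ] Y) φ‖ := by
      intro n
      have he : φ ((T n : X →L[ℝ] Y) (x n)) =
          (opAdjoint ((T n : M) : X →L[ℝ] Y) φ) (x n) := by
        simp [opAdjoint]
      rw [he]
      calc ‖(opAdjoint ((T n : M) : X →L[ℝ] Y) φ) (x n)‖
          ≤ ‖opAdjoint ((T n : M) : X →L[ℝ] Y) φ‖ * ‖x n‖ :=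
            (opAdjoint ((T n : M) : X →L[ℝ] Y) φ).le_opNorm _
        _ ≤ ‖opAdjoint ((T n : M) : X →L[ℝ] Y) φ‖ * 1 :=
            mul_le_mul_of_nonneg_left (hx1 n) (norm_nonneg _)
        _ = _ := mul_one _
    have h0 : Tendsto (fun n => ‖φ ((T n : X →L[ℝ] Y) (x n))‖) atTop (𝓝 0) :=
      squeeze_zero (fun n => norm_nonneg _) hb hadj
    exact tendsto_zero_iff_norm_tendsto_zero.mpr h0
  -- Schur property: it is norm null
  have hnn : NormNull (fun n => (T n : X →L[ℝ] Y) (x n)) := hY _ hwn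
  -- squeeze for the operator norms
  have hup : Tendsto (fun n => ‖(T n : X →L[ℝ] Y) (x n)‖ + 1 / ((n : ℝ) + 1)) atTop (𝓝 0) := by
    have := hnn.add tendsto_one_div_add_atTop_nhds_zero_nat
    simpa using this
  have : Tendsto (fun n => ‖(T n : X →L[ℝ] Y)‖) atTop (𝓝 0) :=
    squeeze_zero (fun n => norm_nonneg _) hx2 hup
  exact this
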